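/- Let O : H₁ → H₂ be bounded, Ψ a frame in H₁ and Φ a frame in H₂. Then the matrix M with entries M_{m,n} = ⟨O ψ̃_n, φ_m⟩ maps the range of the analysis operator C_Ψ into the range of C_Φ via (⟨f, ψ_k⟩)_k ↦ (⟨Of, φ_k⟩)_k. If O is surjective, M maps ran(C_Ψ) onto ran(C_Φ); if O is injective, M restricted to ran(C_Ψ) is injective. -/

import Mathlib

open scoped InnerProductSpace

noncomputable section

local notation "ℓ²" => lp (fun _ : ℕ => ℂ) 2

variable {H₁ H₂ H₃ : Type*}
  [NormedAddCommGroup H₁] [InnerProductSpace ℂ H₁] [CompleteSpace H₁]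
  [NormedAddCommGroup H₂] [InnerProductSpace ℂ H₂] [CompleteSpace H₂]
  [NormedAddCommGroup H₃] [InnerProductSpace ℂ H₃] [CompleteSpace H₃]

/-- `ψ` is a Bessel sequence with bound `B`:  `∑ₖ |⟨f, ψₖ⟩|² ≤ B ‖f‖²`.
(Note: the paper's `⟨f, ψₖ⟩`, linear in `f`, is Mathlib's `⟪ψ k, f⟫_ℂ`.) -/
def IsBessel {H : Type*} [NormedAddCommGroup H] [InnerProductSpace ℂ H]
    (ψ : ℕ → H) (B : ℝ) : Prop :=
  ∀ f : H, Summable (fun k => ‖⟪ψ k, f⟫_ℂ‖ ^ 2) ∧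
    ∑' k, ‖⟪ψ k, f⟫_ℂ‖ ^ 2 ≤ B * ‖f‖ ^ 2

/-- `ψ` is a frame with bounds `A`, `B`:  `A ‖f‖² ≤ ∑ₖ |⟨f, ψₖ⟩|² ≤ B ‖f‖²`. -/
def IsFrame {H : Type*} [NormedAddCommGroup H] [InnerProductSpace ℂ H]
    (ψ : ℕ → H) (A B : ℝ) : Prop :=
  0 < A ∧ ∀ f : H, Summable (fun k => ‖⟪ψ k, f⟫_ℂ‖ ^ 2) ∧
    A * ‖f‖ ^ 2 ≤ ∑' k, ‖⟪ψ k, f⟫_ℂ‖ ^ 2 ∧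
    ∑' k, ‖⟪ψ k, f⟫_ℂ‖ ^ 2 ≤ B * ‖f‖ ^ 2

/-- `C` is the analysis operator of `ψ`:  `C f = (⟨f, ψₖ⟩)ₖ`. -/
def IsAnalysis {H : Type*} [NormedAddCommGroup H] [InnerProductSpace ℂ H]
    (ψ : ℕ → H) (C : H →L[ℂ] ℓ²) : Prop :=
  ∀ (f : H) (k : ℕ), C f k = ⟪ψ k, f⟫_ℂ

/-- `D` is the synthesis operator of `ψ`:  `D c = ∑ₖ cₖ ψₖ`. -/
def IsSynthesis {H : Type*} [NormedAddCommGroup H] [InnerProductSpace ℂ H]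
    (ψ : ℕ → H) (D : ℓ² →L[ℂ] H) : Prop :=
  ∀ c : ℓ², HasSum (fun k => c k • ψ k) (D c)

/-- `S` is the frame operator of `ψ`:  `S f = ∑ₖ ⟨f, ψₖ⟩ ψₖ`. -/
def IsFrameOp {H : Type*} [NormedAddCommGroup H] [InnerProductSpace ℂ H]
    (ψ : ℕ → H) (S : H →L[ℂ] H) : Prop :=
  ∀ f : H, HasSum (fun k => ⟪ψ k, f⟫_ℂ • ψ k) (S f)

/-- `dψ` is the canonical dual of `ψ`, whose frame operator is `S`: `dψ k = S⁻¹ ψ k`. -/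
def IsCanonicalDual {H : Type*} [NormedAddCommGroup H] [InnerProductSpace ℂ H]
    (ψ : ℕ → H) (S : H →L[ℂ] H) (dψ : ℕ → H) : Prop :=
  IsFrameOp ψ S ∧ ∀ k, S (dψ k) = ψ k

/-- `ψ` is a Riesz basis with bounds `A`, `B`: it is complete and
`A ∑|cₖ|² ≤ ‖∑ cₖ ψₖ‖² ≤ B ∑|cₖ|²` for all finite sequences `c`. -/
def IsRieszBasis {H : Type*} [NormedAddCommGroup H] [InnerProductSpace ℂ H]
    (ψ : ℕ → H) (A B : ℝ) : Prop :=
  0 < A ∧ (Submodule.span ℂ (Set.range ψ)).topologicalClosure = ⊤ ∧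
    ∀ c : ℕ →₀ ℂ,
      A * ∑ k ∈ c.support, ‖c k‖ ^ 2 ≤ ‖∑ k ∈ c.support, c k • ψ k‖ ^ 2 ∧
      ‖∑ k ∈ c.support, c k • ψ k‖ ^ 2 ≤ B * ∑ k ∈ c.support, ‖c k‖ ^ 2


private lemma frame_eq_zero {H : Type*} [NormedAddCommGroup H] [InnerProductSpace ℂ H]
    {ψ : ℕ → H} {A B : ℝ} (h : IsFrame ψ A B) {f : H}
    (hf : ∀ k, ⟪ψ k, f⟫_ℂ = 0) : f = 0 := by
  have h1 := (h.2 f).2.1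
  simp only [hf, norm_zero] at h1
  have hz : (0:ℝ)^2 = 0 := by norm_num
  rw [hz, tsum_zero] at h1
  have hA := h.1
  have : ‖f‖ = 0 := by
    by_contra hne
    have hp : 0 < ‖f‖ := (norm_nonneg f).lt_of_ne (Ne.symm hne)
    rw [pow_two] at h1
    nlinarith [mul_pos hA (mul_pos hp hp)]
  exact norm_eq_zero.mp this

/-- The matrix `M` with entries `⟨O ψ̃ₙ, φₘ⟩` maps `ran C_Ψ` into
`ran C_Φ` via `(⟨f, ψₖ⟩)ₖ ↦ (⟨O f, φₖ⟩)ₖ`; onto if `O` is surjective, and injectively on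
`ran C_Ψ` if `O` is injective. -/
theorem stmt8 {ψ : ℕ → H₁} {φ : ℕ → H₂} {A B A' B' : ℝ}
    (hΨ : IsFrame ψ A B) (hΦ : IsFrame φ A' B')
    (S : H₁ →L[ℂ] H₁) (dψ : ℕ → H₁) (hdΨ : IsCanonicalDual ψ S dψ)
    (O : H₁ →L[ℂ] H₂)
    (CΨ : H₁ →L[ℂ] ℓ²) (hCΨ : IsAnalysis ψ CΨ)
    (CΦ : H₂ →L[ℂ] ℓ²) (hCΦ : IsAnalysis φ CΦ)
    (M : ℓ² →L[ℂ] ℓ²)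
    (hM : ∀ (c : ℓ²) (m : ℕ), M c m = ∑' n, ⟪φ m, O (dψ n)⟫_ℂ * c n) :
    (∀ f : H₁, M (CΨ f) = CΦ (O f)) ∧
    (Function.Surjective O → Set.SurjOn M (Set.range (⇑CΨ)) (Set.range (⇑CΦ))) ∧
    (Function.Injective O → Set.InjOn M (Set.range (⇑CΨ))) := by
  obtain ⟨hSop, hSd⟩ := hdΨ
  have hA := hΨ.1
  -- ⟪f, S f⟫ equals the real frame sum
  have hfSf : ∀ f : H₁, ⟪f, S f⟫_ℂ = ((∑' k, ‖⟪ψ k, f⟫_ℂ‖ ^ 2 : ℝ) : ℂ) := by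
    intro f
    have h := (hSop f).mapL (innerSL ℂ f)
    have h2 : HasSum (fun k => ((‖⟪ψ k, f⟫_ℂ‖ ^ 2 : ℝ) : ℂ)) ⟪f, S f⟫_ℂ := by
      convert h using 2 with k
      · rfl
      rw [innerSL_apply_apply, inner_smul_right, ← inner_conj_symm (ψ k) f, RCLike.conj_mul]
      rw [RCLike.norm_conj]
      norm_cast
      rw [innerSL_apply_apply]
    exact h2.unique ((Complex.hasSum_ofReal).2 ((hΨ.2 f).1.hasSum))
  -- lower bound : A * ‖f‖^2 ≤ ‖f‖ * ‖S f‖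
  have hlow : ∀ f : H₁, A * ‖f‖ ^ 2 ≤ ‖f‖ * ‖S f‖ := by
    intro f
    have h1 := (hΨ.2 f).2.1
    have h2 : ‖⟪f, S f⟫_ℂ‖ = |∑' k, ‖⟪ψ k, f⟫_ℂ‖ ^ 2| := by
      rw [hfSf f]
      simp [Complex.norm_real, Real.norm_eq_abs]
    have h3 : ∑' k, ‖⟪ψ k, f⟫_ℂ‖ ^ 2 ≤ ‖⟪f, S f⟫_ℂ‖ := by
      rw [h2]; exact le_abs_self _
    calc A * ‖f‖ ^ 2 ≤ ∑' k, ‖⟪ψ k, f⟫_ℂ‖ ^ 2 := h1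
      _ ≤ ‖⟪f, S f⟫_ℂ‖ := h3
      _ ≤ ‖f‖ * ‖S f‖ := norm_inner_le_norm f (S f)
  have hbound : ∀ f : H₁, ‖f‖ ≤ A⁻¹ * ‖S f‖ := by
    intro f
    rcases eq_or_ne f 0 with rfl | hf
    · simp
    · have hf' : 0 < ‖f‖ := norm_pos_iff.mpr hf
      have := hlow f
      rw [pow_two] at this
      have hAf : A * ‖f‖ ≤ ‖S f‖ := by
        have := le_of_mul_le_mul_right (by linarith [this] : A * ‖f‖ * ‖f‖ ≤ ‖S f‖ * ‖f‖) hf'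
        exact this
      calc ‖f‖ = A⁻¹ * (A * ‖f‖) := by field_simp
        _ ≤ A⁻¹ * ‖S f‖ := by
            apply mul_le_mul_of_nonneg_left hAf
            positivity
  have hanti : AntilipschitzWith (A⁻¹).toNNReal S :=
    S.antilipschitz_of_bound (fun x => by
      rw [Real.coe_toNNReal _ (by positivity)]; exact hbound x)
  have hinj : Function.Injective S := hanti.injective
  have hker : LinearMap.ker (S : H₁ →ₗ[ℂ] H₁) = ⊥ := (LinearMap.ker_eq_bot (f := (S : H₁ →ₗ[ℂ] H₁))).mpr hinj
  have hclosed : IsClosed (LinearMap.range (S : H₁ →ₗ[ℂ] H₁) : Set H₁) := by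
    have : (LinearMap.range (S : H₁ →ₗ[ℂ] H₁) : Set H₁) = Set.range S := by
      ext x; simp [LinearMap.mem_range]
    rw [this]
    exact hanti.isClosed_range S.uniformContinuous
  haveI : CompleteSpace (LinearMap.range (S : H₁ →ₗ[ℂ] H₁)) := hclosed.completeSpace_coe
  have hrange : LinearMap.range (S : H₁ →ₗ[ℂ] H₁) = ⊤ := by
    rw [← Submodule.orthogonal_eq_bot_iff]
    rw [Submodule.eq_bot_iff]
    intro g hg
    have h1 : ⟪S g, g⟫_ℂ = 0 :=
      ((LinearMap.range (S : H₁ →ₗ[ℂ] H₁)).mem_orthogonal g).1 hg (S g) (LinearMap.mem_range_self _ g)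
    have h2 : ⟪g, S g⟫_ℂ = 0 := by rw [← inner_conj_symm, h1, map_zero]
    rw [hfSf g] at h2
    have h3 : (∑' k, ‖⟪ψ k, g⟫_ℂ‖ ^ 2 : ℝ) = 0 := by exact_mod_cast h2
    have h4 := (hΨ.2 g).2.1
    rw [h3] at h4
    have : ‖g‖ = 0 := by
      by_contra hne
      have hp : 0 < ‖g‖ := (norm_nonneg g).lt_of_ne (Ne.symm hne)
      rw [pow_two] at h4
      nlinarith [mul_pos hA (mul_pos hp hp)]
    exact norm_eq_zero.mp this
  set E := ContinuousLinearEquiv.ofBijective S hker hrange with hE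
  have hEcoe : ∀ x, E x = S x := fun x =>
    congrFun (ContinuousLinearEquiv.coeFn_ofBijective S hker hrange) x
  have hdψ : ∀ n, dψ n = E.symm (ψ n) := by
    intro n
    rw [← hSd n, ← hEcoe]
    exact (E.symm_apply_apply (dψ n)).symm
  -- reconstruction formula
  have hrecon : ∀ f : H₁, HasSum (fun n => ⟪ψ n, f⟫_ℂ • dψ n) f := by
    intro f
    have h := (hSop f).mapL (E.symm : H₁ →L[ℂ] H₁)
    have h1 : (E.symm : H₁ →L[ℂ] H₁) (S f) = f := by
      rw [ContinuousLinearEquiv.coe_coe, ← hEcoe, E.symm_apply_apply]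
    rw [h1] at h
    convert h using 2 with n
    rw [ContinuousLinearEquiv.coe_coe, map_smul, ← hdψ]
  -- key identity
  have key : ∀ (f : H₁) (m : ℕ), ⟪φ m, O f⟫_ℂ = ∑' n, ⟪φ m, O (dψ n)⟫_ℂ * ⟪ψ n, f⟫_ℂ := by
    intro f m
    have h := (hrecon f).mapL ((innerSL ℂ (φ m)).comp O)
    simp only [ContinuousLinearMap.comp_apply, map_smul, innerSL_apply_apply, smul_eq_mul] at h
    rw [← h.tsum_eq]
    exact tsum_congr fun n => mul_comm _ _
  have part1 : ∀ f : H₁, M (CΨ f) = CΦ (O f) := by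
    intro f
    apply lp.ext
    funext m
    rw [hM, hCΦ, key f m]
    exact tsum_congr fun n => by rw [hCΨ]
  refine ⟨part1, ?_, ?_⟩
  · intro hO c hc
    obtain ⟨g, rfl⟩ := hc
    obtain ⟨f, rfl⟩ := hO g
    exact ⟨CΨ f, Set.mem_range_self f, part1 f⟩
  · intro hO c hc c' hc' hMc
    obtain ⟨f, rfl⟩ := hc
    obtain ⟨f', rfl⟩ := hc'
    rw [part1 f, part1 f'] at hMc
    have hOf : O f = O f' := by
      apply sub_eq_zero.mp
      apply frame_eq_zero hΦ
      intro k
      rw [inner_sub_right, ← hCΦ, ← hCΦ, sub_eq_zero]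
      exact congrFun (congrArg (fun x : ℓ² => (x : ∀ i, ℂ)) hMc) k
    have : f = f' := hO hOf
    rw [this]
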